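/- For every natural number k there exists a natural number N such that for every finite set D with |D| = n ≥ N and every subgroup G of Sym(D), if |G| ≥ (n−k)!, then G has an orbit on D of cardinality at least n−k. -/

import Mathlib

open Nat (factorial)
local notation:10000 n "!" => Nat.factorial n

-- step lemma: a! * b! ≤ s! * t! when a+b = s+t, t ≤ b ≤ a
lemma fact_step : ∀ d a b s t : ℕ, b - t = d → a + b = s + t → t ≤ b → b ≤ a →
    a ! * b ! ≤ s ! * t ! := by
  intro d
  induction d with
  | zero =>
    intro a b s t hd hsum ht hba
    have hbt : b = t := le_antisymm (Nat.sub_eq_zero_iff_le.mp hd) ht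
    subst hbt
    have : a = s := by omega
    subst this; exact le_rfl
  | succ d ih =>
    intro a b s t hd hsum ht hba
    have hb1 : 1 ≤ b := by omega
    have h1 : a ! * b ! ≤ (a+1)! * (b-1)! := by
      calc a ! * b ! = a ! * (b * (b-1)!) := by rw [Nat.mul_factorial_pred (Nat.one_le_iff_ne_zero.mp hb1)]
        _ = (b * a !) * (b-1)! := by ring
        _ ≤ ((a+1) * a !) * (b-1)! := by
            have : b ≤ a + 1 := by omega
            exact Nat.mul_le_mul_right _ (Nat.mul_le_mul_right _ this)
        _ = (a+1)! * (b-1)! := by rw [Nat.factorial_succ]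
    exact h1.trans (ih (a+1) (b-1) s t (by omega) (by omega) (by omega) (by omega))

lemma fact_mul_fact_le (a b s t : ℕ) (hsum : a + b = s + t) (hta : t ≤ a) (htb : t ≤ b) :
    a ! * b ! ≤ s ! * t ! := by
  rcases le_total b a with h | h
  · exact fact_step _ a b s t rfl hsum htb h
  · rw [mul_comm]
    exact fact_step _ b a s t rfl (by omega) hta h

lemma subgroup_card_le : ∀ n : ℕ, ∀ (D : Type) [Fintype D], Fintype.card D = n →
    ∀ (s : ℕ) (G : Subgroup (Equiv.Perm D)),
      (∀ x : D, Set.ncard {y : D | ∃ g ∈ G, g x = y} ≤ s) →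
      Nat.card G ≤ s ! * (n - s)! := by
  intro n
  induction n using Nat.strong_induction_on with
  | _ n ih =>
  intro D _ hcard s G horb
  classical
  have hGle : Nat.card G ≤ n ! := by
    calc Nat.card G ≤ Nat.card (Equiv.Perm D) :=
          Nat.card_le_card_of_injective _ Subtype.val_injective
      _ = n ! := by rw [Nat.card_eq_fintype_card, Fintype.card_perm, hcard]
  by_cases hsn : n ≤ s
  · calc Nat.card G ≤ n ! := hGle
      _ ≤ s ! := Nat.factorial_le hsn
      _ ≤ s ! * (n - s)! := Nat.le_mul_of_pos_right _ (Nat.factorial_pos _)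
  push_neg at hsn
  have hn1 : 1 ≤ n := by omega
  have hD : Nonempty D := Fintype.card_pos_iff.mp (by omega)
  obtain ⟨x⟩ := hD
  set O : Set D := {y : D | ∃ g ∈ G, g x = y} with hO
  have hxO : x ∈ O := ⟨1, G.one_mem, rfl⟩
  have hinvar : ∀ g ∈ G, ∀ y : D, y ∈ O ↔ g y ∈ O := by
    intro g hg y
    constructor
    · rintro ⟨h, hh, rfl⟩
      exact ⟨g * h, G.mul_mem hg hh, rfl⟩
    · rintro ⟨h, hh, hyh⟩
      refine ⟨g⁻¹ * h, G.mul_mem (G.inv_mem hg) hh, ?_⟩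
      simp [Equiv.Perm.mul_apply, hyh]
  have hinvarC : ∀ g ∈ G, ∀ y : D, y ∈ Oᶜ ↔ g y ∈ Oᶜ := by
    intro g hg y
    simp [Set.mem_compl_iff, hinvar g hg y]
  -- restriction homomorphism to the complement
  set ψ : G →* Equiv.Perm ↥(Oᶜ) :=
    { toFun := fun g => Equiv.Perm.subtypePerm (g : Equiv.Perm D)
        (fun y => (hinvarC g g.2 y).symm)
      map_one' := by ext y; simp
      map_mul' := fun a b => by ext y; rfl } with hψ
  set H : Subgroup (Equiv.Perm ↥(Oᶜ)) := ψ.range with hH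
  -- injective map G → Perm O × H
  set Φ : G → Equiv.Perm ↥O × H := fun g =>
    ⟨Equiv.Perm.subtypePerm (g : Equiv.Perm D) (fun y => (hinvar g g.2 y).symm),
     ⟨ψ g, ⟨g, rfl⟩⟩⟩ with hΦ
  have hΦinj : Function.Injective Φ := by
    intro a b hab
    have h1 := congrArg Prod.fst hab
    have h2 := congrArg (fun p => (p.2 : Equiv.Perm ↥(Oᶜ))) hab
    ext y
    by_cases hy : y ∈ O
    · have := congrArg (fun e => (e ⟨y, hy⟩ : D)) h1
      simpa [hΦ] using this
    · have := congrArg (fun e => (e ⟨y, hy⟩ : D)) h2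
      simpa [hΦ, hψ] using this
  set m : ℕ := Nat.card ↥O with hm
  have hmncard : m = O.ncard := Nat.card_coe_set_eq O
  have hms : m ≤ s := by rw [hmncard]; exact horb x
  have hm1 : 1 ≤ m := by
    rw [hmncard]
    exact (Set.ncard_pos (Set.toFinite O)).mpr ⟨x, hxO⟩
  have hcardC : Fintype.card ↥(Oᶜ) = n - m := by
    rw [Fintype.card_compl_set, hcard, hmncard, Set.ncard_eq_toFinset_card', Set.toFinset_card]
  have hGle2 : Nat.card G ≤ m ! * Nat.card H := by
    calc Nat.card G ≤ Nat.card (Equiv.Perm ↥O × H) := Nat.card_le_card_of_injective Φ hΦinj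
      _ = m ! * Nat.card H := by
          rw [Nat.card_prod]; simp [Nat.card_eq_fintype_card, Fintype.card_perm, hm]
  -- orbits of H are at most s
  have horbH : ∀ y : ↥(Oᶜ), Set.ncard {z : ↥(Oᶜ) | ∃ h ∈ H, h y = z} ≤ s := by
    intro y
    have hsub : (Subtype.val '' {z : ↥(Oᶜ) | ∃ h ∈ H, h y = z}) ⊆
        {w : D | ∃ g ∈ G, g (y : D) = w} := by
      rintro w ⟨z, ⟨h, hh, rfl⟩, rfl⟩
      obtain ⟨g, rfl⟩ := hh
      exact ⟨g, g.2, rfl⟩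
    calc Set.ncard {z : ↥(Oᶜ) | ∃ h ∈ H, h y = z}
        = Set.ncard (Subtype.val '' {z : ↥(Oᶜ) | ∃ h ∈ H, h y = z}) :=
          (Set.ncard_image_of_injective _ Subtype.val_injective).symm
      _ ≤ Set.ncard {w : D | ∃ g ∈ G, g (y : D) = w} :=
          Set.ncard_le_ncard hsub (Set.toFinite _)
      _ ≤ s := horb _
  have hHle : Nat.card H ≤ s ! * (n - m - s)! :=
    ih (n - m) (by omega) ↥(Oᶜ) hcardC s H horbH
  by_cases hcase : s ≤ n - m
  · have hdvd : m ! * (n - m - s)! ∣ (n - s)! := by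
      have := Nat.factorial_mul_factorial_dvd_factorial_add m (n - m - s)
      have heq : m + (n - m - s) = n - s := by omega
      rwa [heq] at this
    calc Nat.card G ≤ m ! * (s ! * (n - m - s)!) :=
          hGle2.trans (Nat.mul_le_mul_left _ hHle)
      _ = s ! * (m ! * (n - m - s)!) := by ring
      _ ≤ s ! * (n - s)! :=
          Nat.mul_le_mul_left _ (Nat.le_of_dvd (Nat.factorial_pos _) hdvd)
  · push_neg at hcase
    have hHle2 : Nat.card H ≤ (n - m)! := by
      calc Nat.card H ≤ Nat.card (Equiv.Perm ↥(Oᶜ)) :=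
            Nat.card_le_card_of_injective _ Subtype.val_injective
        _ = (n - m)! := by rw [Nat.card_eq_fintype_card, Fintype.card_perm, hcardC]
    calc Nat.card G ≤ m ! * (n - m)! := hGle2.trans (Nat.mul_le_mul_left _ hHle2)
      _ ≤ s ! * (n - s)! := fact_mul_fact_le m (n - m) s (n - s) (by omega) (by omega) (by omega)


/-- For every natural number k there exists N such that for every finite
set D with |D| = n ≥ N and every subgroup G of Sym(D), if |G| ≥ (n−k)!, then G has an
orbit on D of cardinality at least n−k. -/
theorem stmt_2 (k : ℕ) :
    ∃ N : ℕ, ∀ (D : Type) [Fintype D],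
      N ≤ Fintype.card D →
      ∀ G : Subgroup (Equiv.Perm D),
        Nat.factorial (Fintype.card D - k) ≤ Nat.card G →
        ∃ x : D, Fintype.card D - k ≤ Set.ncard {y : D | ∃ g ∈ G, g x = y} := by

  refine ⟨(k+1)! + k + 1, ?_⟩
  intro D _ hN G hG
  by_contra hcon
  push_neg at hcon
  set n := Fintype.card D with hn
  have hfac1 : 1 ≤ (k+1)! := Nat.one_le_iff_ne_zero.mpr (Nat.factorial_ne_zero _)
  have hkn : k + 1 ≤ n := by omega
  have horb : ∀ x : D, Set.ncard {y : D | ∃ g ∈ G, g x = y} ≤ n - (k+1) := by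
    intro x
    have := hcon x
    omega
  have hle := subgroup_card_le n D rfl (n - (k+1)) G horb
  have heq : n - (n - (k+1)) = k + 1 := by omega
  rw [heq] at hle
  have hlt : (n - (k+1))! * (k+1)! < (n - k)! := by
    have h1 : (n - k)! = (n - k) * (n - (k+1))! := by
      have : n - k = (n - (k+1)) + 1 := by omega
      rw [this, Nat.factorial_succ]
    rw [h1]
    calc (n - (k+1))! * (k+1)! < (n - (k+1))! * (n - k) := by
          exact Nat.mul_lt_mul_of_le_of_lt le_rfl (by omega) (Nat.factorial_pos _)
      _ = (n - k) * (n - (k+1))! := by ring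
  omega
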